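/- Let 0 ≤ α < 1/2 and M > 0 be fixed. Then the Mordell integral satisfies h(ατ; τ) ≪ 1 as τ → 0 within the cone {τ = u+iv : v > 0, |u| ≤ Mv}; that is, there exist constants C, δ > 0 such that |h(ατ; τ)| ≤ C for all τ in the cone with v < δ. -/

import Mathlib

open Real Complex MeasureTheory

lemma sech_le (t : ℝ) : (Real.cosh t)⁻¹ ≤ 2 * Real.exp (-t) := by
  rw [inv_le_iff_one_le_mul₀ (Real.cosh_pos t)]
  have h : Real.exp t / 2 ≤ Real.cosh t := by
    rw [Real.cosh_eq]; nlinarith [Real.exp_pos t, Real.exp_pos (-t)]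
  have h1 : Real.exp (-t) * Real.exp t = 1 := by rw [← Real.exp_add]; simp
  nlinarith [Real.exp_pos t, Real.exp_pos (-t)]

lemma integrable_sech : Integrable fun x : ℝ => (Real.cosh (π * x))⁻¹ := by
  have hc : Continuous fun x : ℝ => (Real.cosh (π * x))⁻¹ :=
    (Real.continuous_cosh.comp (continuous_const.mul continuous_id)).inv₀
      fun x => (Real.cosh_pos _).ne'
  apply hc.locallyIntegrable.integrable_of_isBigO_atTop_of_norm_isNegInvariant
    (g := fun x => Real.exp (-(π * x)))
  · filter_upwards with x
    simp [Real.cosh_neg, mul_neg]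
  · apply Asymptotics.isBigO_of_le' (c := 2)
    intro x
    have := sech_le (π * x)
    simp only [Real.norm_eq_abs, abs_of_pos (inv_pos.2 (Real.cosh_pos (π * x))),
      abs_of_pos (Real.exp_pos _)]
    linarith [this]
  · refine ⟨Set.Ioi 0, Filter.Ioi_mem_atTop 0, ?_⟩
    simpa [neg_mul] using exp_neg_integrableOn_Ioi 0 Real.pi_pos

/-- The Mordell integral `h(z;τ) = ∫_ℝ e^{πiτx² - 2πzx} / cosh(πx) dx`. -/
noncomputable def mordellH (z τ : ℂ) : ℂ :=
  ∫ x : ℝ, Complex.exp ((π : ℂ) * Complex.I * τ * (x : ℂ) ^ 2 - 2 * (π : ℂ) * z * (x : ℂ)) /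
    Complex.cosh ((π : ℂ) * (x : ℂ))

/-- For `0 ≤ α < 1/2`, `h(ατ;τ) ≪ 1` as `τ → 0` in a cone. -/
theorem mordell_bounded (α M : ℝ) (hα0 : 0 ≤ α) (hα1 : α < 1 / 2) (hM : 0 < M) :
    ∃ C > (0 : ℝ), ∃ δ > (0 : ℝ), ∀ u v : ℝ, 0 < v → |u| ≤ M * v → v < δ →
      ‖mordellH ((α : ℂ) * ((u : ℂ) + (v : ℂ) * Complex.I)) ((u : ℂ) + (v : ℂ) * Complex.I)‖
        ≤ C := by
  set K : ℝ := Real.exp (π * (α * M) ^ 2) with hK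
  have hKpos : 0 < K := Real.exp_pos _
  have hInonneg : 0 ≤ ∫ x : ℝ, (Real.cosh (π * x))⁻¹ :=
    integral_nonneg fun x => inv_nonneg.2 (Real.cosh_pos _).le
  refine ⟨K * (∫ x : ℝ, (Real.cosh (π * x))⁻¹) + 1, by positivity, 1, one_pos, ?_⟩
  intro u v hv hu hv1
  have main : ‖mordellH ((α : ℂ) * ((u : ℂ) + (v : ℂ) * Complex.I)) ((u : ℂ) + (v : ℂ) * Complex.I)‖
      ≤ ∫ x : ℝ, K * (Real.cosh (π * x))⁻¹ := by
    apply norm_integral_le_of_norm_le (integrable_sech.const_mul K)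
    filter_upwards with x
    have hcosh : Complex.cosh ((π : ℂ) * (x : ℂ)) = ((Real.cosh (π * x) : ℝ) : ℂ) := by
      rw [Complex.ofReal_cosh, Complex.ofReal_mul]
    rw [norm_div, hcosh, Complex.norm_real, Real.norm_eq_abs,
      abs_of_pos (Real.cosh_pos _), Complex.norm_exp, div_eq_mul_inv]
    have hre : ((π : ℂ) * Complex.I * ((u : ℂ) + (v : ℂ) * Complex.I) * (x : ℂ) ^ 2 -
        2 * (π : ℂ) * ((α : ℂ) * ((u : ℂ) + (v : ℂ) * Complex.I)) * (x : ℂ)).re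
        = -(π * v * x ^ 2) - 2 * π * α * (u * x) := by
      simp [Complex.sub_re, Complex.mul_re, Complex.mul_im, Complex.add_re, Complex.add_im,
        Complex.I_re, Complex.I_im, pow_two]
      ring
    rw [hre]
    have h1 : -(u * x) ≤ M * v * |x| := by
      calc -(u * x) ≤ |u * x| := neg_le_abs _
        _ = |u| * |x| := abs_mul u x
        _ ≤ M * v * |x| := mul_le_mul_of_nonneg_right hu (abs_nonneg x)
    have h2 : 2 * (α * M) * |x| - x ^ 2 ≤ (α * M) ^ 2 := by
      nlinarith [sq_nonneg (|x| - α * M), _root_.sq_abs x]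
    have ha : 2 * π * α * (-(u * x)) ≤ 2 * π * α * (M * v * |x|) :=
      mul_le_mul_of_nonneg_left h1 (by positivity)
    have hb : π * v * (2 * (α * M) * |x| - x ^ 2) ≤ π * v * (α * M) ^ 2 :=
      mul_le_mul_of_nonneg_left h2 (by positivity)
    have hc2 : π * v * (α * M) ^ 2 ≤ π * (α * M) ^ 2 := by
      nlinarith [mul_nonneg (mul_nonneg Real.pi_pos.le (sq_nonneg (α * M))) (by linarith : (0:ℝ) ≤ 1 - v)]
    have hre_le : -(π * v * x ^ 2) - 2 * π * α * (u * x) ≤ π * (α * M) ^ 2 := by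
      nlinarith [ha, hb, hc2]
    have := Real.exp_le_exp.2 hre_le
    have hsech : 0 ≤ (Real.cosh (π * x))⁻¹ := inv_nonneg.2 (Real.cosh_pos _).le
    exact mul_le_mul_of_nonneg_right this hsech
  calc _ ≤ ∫ x : ℝ, K * (Real.cosh (π * x))⁻¹ := main
    _ = K * ∫ x : ℝ, (Real.cosh (π * x))⁻¹ := integral_const_mul K _
    _ ≤ K * (∫ x : ℝ, (Real.cosh (π * x))⁻¹) + 1 := by linarith
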